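/- Let X, Y be finite sets and let γ, γ' be two distinct probability distributions on X × Y with the same marginals on X and on Y. Then there exists a finite sequence of pairs (x_1,y_1),…,(x_N,y_N) with each (x_i,y_i) in the support of γ and each (x_i,y_{i+1}) (with y_{N+1}=y_1) in the support of γ', and the multiset {(x_i,y_i)} is not equal to the multiset {(x_i,y_{i+1})}. -/
import Mathlib

/-- γ is a probability distribution on a finite type. -/
def IsDist {Z : Type*} [Fintype Z] (γ : Z → ℝ) : Prop :=
  (∀ z, 0 ≤ γ z) ∧ ∑ z, γ z = 1

lemma exists_pos_of_sum_eq_zero {ι : Type*} [Fintype ι] (f : ι → ℝ) (h : ∑ i, f i = 0)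
    {a : ι} (ha : f a < 0) : ∃ b, 0 < f b := by
  by_contra h'
  push_neg at h'
  have : ∑ i, f i < ∑ _i : ι, (0:ℝ) :=
    Finset.sum_lt_sum (fun i _ => h' i) ⟨a, Finset.mem_univ a, ha⟩
  simp [h] at this

lemma exists_neg_of_sum_eq_zero {ι : Type*} [Fintype ι] (f : ι → ℝ) (h : ∑ i, f i = 0)
    {a : ι} (ha : 0 < f a) : ∃ b, f b < 0 := by
  have h' : ∑ i, -f i = 0 := by simp [h]
  obtain ⟨b, hb⟩ := exists_pos_of_sum_eq_zero (fun i => -f i) h' (a := a) (by simpa using ha)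
  exact ⟨b, by simpa using hb⟩

lemma finRotate_coe {N : ℕ} (i : Fin N) : ((finRotate N) i : ℕ) = ((i : ℕ) + 1) % N := by
  cases N with
  | zero => exact i.elim0
  | succ n =>
    rw [finRotate_succ_apply, Fin.add_def]
    simp [Nat.add_mod_mod, Fin.val_one']

/-- If γ and γ' are distinct distributions on X × Y with the same marginals, then there is a
cyclic sequence of pairs with (x_i, y_i) in the support of γ and (x_i, y_{i+1}) in the support
of γ', whose two associated multisets differ. -/
theorem stmt2 {X Y : Type*} [Fintype X] [Fintype Y]
    (γ γ' : X × Y → ℝ) (hγ : IsDist γ) (hγ' : IsDist γ')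
    (hmx : ∀ x, ∑ y, γ' (x, y) = ∑ y, γ (x, y))
    (hmy : ∀ y, ∑ x, γ' (x, y) = ∑ x, γ (x, y))
    (hne : γ' ≠ γ) :
    ∃ (N : ℕ) (x : Fin N → X) (y : Fin N → Y), 0 < N ∧
      (∀ i, 0 < γ (x i, y i)) ∧
      (∀ i, 0 < γ' (x i, y (finRotate N i))) ∧
      ((List.ofFn fun i => (x i, y i)) : Multiset (X × Y)) ≠
        ((List.ofFn fun i => (x i, y (finRotate N i))) : Multiset (X × Y)) := by
  classical
  set D : X × Y → ℝ := fun p => γ' p - γ p with hDdef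
  have hrow : ∀ x, ∑ y, D (x, y) = 0 := by
    intro x
    simp only [hDdef]
    rw [Finset.sum_sub_distrib, hmx x, sub_self]
  have hcol : ∀ y, ∑ x, D (x, y) = 0 := by
    intro y
    simp only [hDdef]
    rw [Finset.sum_sub_distrib, hmy y, sub_self]
  have htot : ∑ p : X × Y, D p = 0 := by
    rw [Fintype.sum_prod_type]
    simp [hrow]
  have hstart : ∃ p, D p < 0 := by
    by_contra h
    push_neg at h
    apply hne
    funext p
    have hz : ∀ p ∈ Finset.univ, D p = 0 :=
      (Finset.sum_eq_zero_iff_of_nonneg (fun p _ => h p)).1 htot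
    have := hz p (Finset.mem_univ p)
    simp only [hDdef] at this
    linarith
  have step : ∀ p : X × Y, D p < 0 → ∃ q : X × Y, 0 < D (p.1, q.2) ∧ D q < 0 := by
    rintro ⟨a, b⟩ hp
    obtain ⟨y', hy'⟩ := exists_pos_of_sum_eq_zero (fun y => D (a, y)) (hrow a) (a := b) hp
    obtain ⟨x', hx'⟩ := exists_neg_of_sum_eq_zero (fun x => D (x, y')) (hcol y') (a := a) hy'
    exact ⟨(x', y'), hy', hx'⟩
  obtain ⟨p0, hp0⟩ := hstart
  let F : {p : X × Y // D p < 0} → {p : X × Y // D p < 0} :=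
    fun p => ⟨(step p.1 p.2).choose, (step p.1 p.2).choose_spec.2⟩
  let s : ℕ → {p : X × Y // D p < 0} := fun n => F^[n] ⟨p0, hp0⟩
  have hsneg : ∀ n, D (s n).1 < 0 := fun n => (s n).2
  have hslink : ∀ n, 0 < D ((s n).1.1, (s (n+1)).1.2) := by
    intro n
    have hs : s (n+1) = F (s n) := Function.iterate_succ_apply' F n _
    rw [hs]
    exact (step (s n).1 (s n).2).choose_spec.1
  obtain ⟨m, n, hmn, heq⟩ :=
    Finite.exists_ne_map_eq_of_infinite (fun n : ℕ => (s n).1.2)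
  wlog hlt : m < n generalizing m n
  · exact this n m hmn.symm heq.symm (by omega)
  refine ⟨n - m, fun i => (s (m + i)).1.1, fun i => (s (m + i)).1.2, by omega, ?_, ?_, ?_⟩
  · intro i
    have h2 : D (s (m + i)).1 < 0 := hsneg (m + i)
    simp only [hDdef] at h2
    have h3 : 0 ≤ γ' (s (m + i)).1 := hγ'.1 _
    have hpair : ((s (m + i)).1.1, (s (m + i)).1.2) = (s (m + i)).1 := Prod.mk.eta
    rw [hpair]
    linarith
  case' refine_3 => intro hEq
  all_goals {
    have hy2 : ∀ i : Fin (n - m),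
        (s (m + (finRotate (n - m) i : ℕ))).1.2 = (s (m + (i : ℕ) + 1)).1.2 := by
      intro i
      have hidx : ((finRotate (n - m)) i : ℕ) = ((i : ℕ) + 1) % (n - m) := finRotate_coe i
      have hiN := i.2
      rcases Nat.lt_or_ge ((i : ℕ) + 1) (n - m) with h | h
      · have : m + ((finRotate (n - m)) i : ℕ) = m + (i : ℕ) + 1 := by
          rw [hidx, Nat.mod_eq_of_lt h]; omega
        rw [this]
      · have hi : (i : ℕ) + 1 = n - m := by omega
        have h1 : m + ((finRotate (n - m)) i : ℕ) = m := by
          rw [hidx, hi, Nat.mod_self]; omega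
        have h2 : m + (i : ℕ) + 1 = n := by omega
        rw [h1, h2]
        exact heq
    have hrotpos : ∀ i : Fin (n - m),
        0 < D ((s (m + (i : ℕ))).1.1, (s (m + ((finRotate (n - m)) i : ℕ))).1.2) := by
      intro i
      rw [hy2 i]
      exact hslink (m + (i : ℕ))
    first
    | -- goal 2 : positivity of γ'
      (intro i
       have hp := hrotpos i
       simp only [hDdef] at hp
       have h3 : 0 ≤ γ ((s (m + (i : ℕ))).1.1, (s (m + ((finRotate (n - m)) i : ℕ))).1.2) :=
         hγ.1 _
       linarith)
    | -- goal 3 : multisets differ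
      (have hNpos : 0 < n - m := by omega
       have hmem : ((s (m + ((⟨0, hNpos⟩ : Fin (n - m)) : ℕ))).1.1,
           (s (m + ((⟨0, hNpos⟩ : Fin (n - m)) : ℕ))).1.2) ∈
           ((List.ofFn fun i : Fin (n - m) =>
             ((s (m + (i : ℕ))).1.1, (s (m + (i : ℕ))).1.2)) : Multiset (X × Y)) := by
         rw [Multiset.mem_coe, List.mem_ofFn]
         exact ⟨⟨0, hNpos⟩, rfl⟩
       rw [hEq, Multiset.mem_coe, List.mem_ofFn] at hmem
       obtain ⟨j, hj⟩ := hmem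
       beta_reduce at hj
       have hpos := hrotpos j
       rw [hj] at hpos
       have hneg : D ((s (m + ((⟨0, hNpos⟩ : Fin (n - m)) : ℕ))).1.1,
           (s (m + ((⟨0, hNpos⟩ : Fin (n - m)) : ℕ))).1.2) < 0 := by
         have := hsneg (m + ((⟨0, hNpos⟩ : Fin (n - m)) : ℕ))
         rwa [Prod.mk.eta]
       linarith) }
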